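/- arXiv:1409.6998 — 2 statements merged into one kernel-verified Lean document; each statement's English description precedes it below -/
import Mathlib

section
/- Let Ω ⊆ ℝⁿ be an open set of finite volume and let 1 < α < n/(n−1). If E ⊆ Ω is a measurable set with |E| > 0, finite perimeter, and whose closure is a compact subset of Ω, then P(E)/|E|^{1/α} > h_α(Ω). Consequently no α-Cheeger set of Ω is compactly contained in Ω: the boundary of any α-Cheeger set must touch ∂Ω. -/
open MeasureTheory ENNReal Metric Set

noncomputable def perimeter {n : ℕ} (E : Set (EuclideanSpace ℝ (Fin n))) : ℝ≥0∞ :=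
  ⨆ (φ : EuclideanSpace ℝ (Fin n) → EuclideanSpace ℝ (Fin n)) (_ : ContDiff ℝ 1 φ)
    (_ : HasCompactSupport φ) (_ : ∀ x, ‖φ x‖ ≤ 1),
    ENNReal.ofReal (∫ x in E, ∑ i, fderiv ℝ φ x (EuclideanSpace.single i 1) i)

noncomputable def cheegerRatio {n : ℕ} (α : ℝ) (E : Set (EuclideanSpace ℝ (Fin n))) : ℝ≥0∞ :=
  perimeter E / volume E ^ (1 / α)

noncomputable def cheegerConst {n : ℕ} (α : ℝ) (Ω : Set (EuclideanSpace ℝ (Fin n))) : ℝ≥0∞ :=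
  ⨅ (E : Set (EuclideanSpace ℝ (Fin n))) (_ : MeasurableSet E) (_ : E ⊆ Ω)
    (_ : 0 < volume E), cheegerRatio α E

def IsCheegerSet {n : ℕ} (α : ℝ) (Ω E : Set (EuclideanSpace ℝ (Fin n))) : Prop :=
  MeasurableSet E ∧ E ⊆ Ω ∧ 0 < volume E ∧ cheegerRatio α E = cheegerConst α Ω

namespace NCCaux
open Pointwise

variable {n : ℕ}
noncomputable def divg {n : ℕ} (φ : EuclideanSpace ℝ (Fin n) → EuclideanSpace ℝ (Fin n))
    (x : EuclideanSpace ℝ (Fin n)) : ℝ :=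
  ∑ i, fderiv ℝ φ x (EuclideanSpace.single i 1) i
lemma perimeter_eq (E : Set (EuclideanSpace ℝ (Fin n))) : perimeter E =
    ⨆ (φ : EuclideanSpace ℝ (Fin n) → EuclideanSpace ℝ (Fin n)) (_ : ContDiff ℝ 1 φ)
      (_ : HasCompactSupport φ) (_ : ∀ x, ‖φ x‖ ≤ 1),
      ENNReal.ofReal (∫ x in E, divg φ x) := rfl
lemma le_perimeter {E : Set (EuclideanSpace ℝ (Fin n))} {φ} (h1 : ContDiff ℝ 1 φ)
    (h2 : HasCompactSupport φ) (h3 : ∀ x, ‖φ x‖ ≤ 1) :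
    ENNReal.ofReal (∫ x in E, divg φ x) ≤ perimeter E := by
  rw [perimeter_eq]
  exact le_iSup_of_le φ (le_iSup_of_le h1 (le_iSup_of_le h2 (le_iSup_of_le h3 le_rfl)))

lemma perimeter_le {E : Set (EuclideanSpace ℝ (Fin n))} {C : ℝ≥0∞}
    (h : ∀ φ, ContDiff ℝ 1 φ → HasCompactSupport φ → (∀ x, ‖φ x‖ ≤ 1) →
      ENNReal.ofReal (∫ x in E, divg φ x) ≤ C) : perimeter E ≤ C := by
  rw [perimeter_eq]
  exact iSup_le fun φ => iSup_le fun h1 => iSup_le fun h2 => iSup_le fun h3 => h φ h1 h2 h3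

lemma perim_pos (hn : 0 < n) {E : Set (EuclideanSpace ℝ (Fin n))} (hE : MeasurableSet E)
    (hb : IsCompact (closure E)) (hpos : 0 < volume E) : 0 < perimeter E := by
  obtain ⟨r, hr⟩ := hb.isBounded.subset_closedBall (0 : EuclideanSpace ℝ (Fin n))
  set R : ℝ := max r 0 with hRdef
  have hR0 : (0:ℝ) ≤ R := le_max_right _ _
  have hER : closure E ⊆ closedBall 0 R :=
    hr.trans (closedBall_subset_closedBall (le_max_left _ _))
  set f : ContDiffBump (0 : EuclideanSpace ℝ (Fin n)) :=
    ⟨R+1, R+2, by linarith, by linarith⟩ with hfdef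
  set M : ℝ := R + 2 with hMdef
  have hM : (0:ℝ) < M := by simp only [hMdef]; linarith
  set φ : EuclideanSpace ℝ (Fin n) → EuclideanSpace ℝ (Fin n) :=
    fun x => (M⁻¹ * f x) • x with hφdef
  have hcd : ContDiff ℝ 1 φ :=
    (contDiff_const.mul f.contDiff).smul contDiff_id
  have hcs : HasCompactSupport φ := by
    apply f.hasCompactSupport.mono
    intro x hx
    simp only [Function.mem_support] at hx ⊢
    intro h0
    apply hx
    simp [hφdef, h0]
  have hnorm : ∀ x, ‖φ x‖ ≤ 1 := by
    intro x
    by_cases hx : ‖x‖ ≤ M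
    · have h1 : ‖φ x‖ = M⁻¹ * f x * ‖x‖ := by
        rw [hφdef]
        simp only [norm_smul, Real.norm_eq_abs]
        rw [abs_of_nonneg (mul_nonneg (by positivity) f.nonneg)]
      rw [h1]
      have h2 := f.nonneg (x := x)
      have h3 := f.le_one (x := x)
      have h4 : (0:ℝ) ≤ ‖x‖ := norm_nonneg x
      have hMi : (0:ℝ) ≤ M⁻¹ := inv_nonneg.mpr hM.le
      have h6 : M⁻¹ * f x * ‖x‖ ≤ M⁻¹ * ‖x‖ := by nlinarith [mul_nonneg (mul_nonneg hMi h4) (sub_nonneg.mpr h3)]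
      have h7 : M⁻¹ * ‖x‖ ≤ M⁻¹ * M := mul_le_mul_of_nonneg_left hx hMi
      calc M⁻¹ * f x * ‖x‖ ≤ M⁻¹ * M := h6.trans h7
        _ = 1 := inv_mul_cancel₀ hM.ne'
    · have h0 : f x = 0 := by
        apply f.zero_of_le_dist
        rw [dist_zero_right]
        simp only [hfdef]
        linarith [not_le.1 hx]
      simp [hφdef, h0]
  have hfd : ∀ x ∈ E, divg φ x = (n : ℝ) * M⁻¹ := by
    intro x hxE
    have hx : ‖x‖ ≤ R := by
      have := hER (subset_closure hxE)
      rwa [mem_closedBall, dist_zero_right] at this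
    have heq : φ =ᶠ[nhds x] fun y => M⁻¹ • y := by
      filter_upwards [Metric.ball_mem_nhds x one_pos] with y hy
      have h1 : f y = 1 := by
        apply f.one_of_mem_closedBall
        rw [mem_closedBall, dist_zero_right]
        have hd := dist_triangle y x 0
        have h5 : dist y x < 1 := mem_ball.mp hy
        rw [dist_zero_right, dist_zero_right] at hd
        show ‖y‖ ≤ R + 1
        linarith
      simp [hφdef, h1]
    have hD : fderiv ℝ φ x = M⁻¹ • ContinuousLinearMap.id ℝ (EuclideanSpace ℝ (Fin n)) := by
      rw [heq.fderiv_eq]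
      exact ((hasFDerivAt_id x).const_smul M⁻¹).fderiv
    simp only [divg, hD, ContinuousLinearMap.smul_apply, ContinuousLinearMap.id_apply,
      PiLp.smul_apply, smul_eq_mul, EuclideanSpace.single_apply, if_pos rfl, mul_one]
    simp [Finset.sum_const, Finset.card_univ, mul_comm]
  have hVfin : volume E < ⊤ :=
    lt_of_le_of_lt (measure_mono subset_closure) hb.measure_lt_top
  have hint : ∫ x in E, divg φ x = (volume E).toReal * ((n : ℝ) * M⁻¹) := by
    rw [setIntegral_congr_fun hE hfd, setIntegral_const, smul_eq_mul, measureReal_def]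
  have hposInt : 0 < ∫ x in E, divg φ x := by
    rw [hint]
    have := ENNReal.toReal_pos hpos.ne' hVfin.ne
    have hn' : (0:ℝ) < n := by exact_mod_cast hn
    positivity
  calc (0:ℝ≥0∞) < ENNReal.ofReal (∫ x in E, divg φ x) := ENNReal.ofReal_pos.mpr hposInt
    _ ≤ perimeter E := le_perimeter hcd hcs hnorm
lemma vol_scale {E : Set (EuclideanSpace ℝ (Fin n))} {t : ℝ} (ht : 0 ≤ t)
    (c : EuclideanSpace ℝ (Fin n)) :
    volume ((fun x => t • x + c) '' E) = ENNReal.ofReal (t ^ n) * volume E := by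
  have himg : (fun x => t • x + c) '' E = c +ᵥ (t • E) := by
    rw [← Set.image_vadd, ← Set.image_smul, ← Set.image_comp]
    simp only [Function.comp_def, vadd_eq_add]
    ext x
    constructor
    · rintro ⟨y, hy, rfl⟩; exact ⟨y, hy, add_comm _ _⟩
    · rintro ⟨y, hy, rfl⟩; exact ⟨y, hy, add_comm _ _⟩
  rw [himg, measure_vadd, Measure.addHaar_smul_of_nonneg volume ht,
    finrank_euclideanSpace_fin]

lemma perim_scale_le {E : Set (EuclideanSpace ℝ (Fin n))} (hE : MeasurableSet E)
    {t : ℝ} (ht : 0 < t) (c : EuclideanSpace ℝ (Fin n)) :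
    perimeter ((fun x => t • x + c) '' E) ≤ ENNReal.ofReal (t ^ n / t) * perimeter E := by
  apply perimeter_le
  intro ψ hψ1 hψ2 hψ3
  set T : EuclideanSpace ℝ (Fin n) → EuclideanSpace ℝ (Fin n) := fun x => t • x + c with hT
  set φ : EuclideanSpace ℝ (Fin n) → EuclideanSpace ℝ (Fin n) := fun x => ψ (T x) with hφ
  have hTcd : ContDiff ℝ 1 T := (contDiff_id.const_smul t).add contDiff_const
  have hφcd : ContDiff ℝ 1 φ := hψ1.comp hTcd
  have hTh : ∃ Th : EuclideanSpace ℝ (Fin n) ≃ₜ EuclideanSpace ℝ (Fin n), ⇑Th = T := by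
    refine ⟨(Homeomorph.smulOfNeZero t ht.ne').trans
      (Homeomorph.addRight c), ?_⟩
    rfl
  obtain ⟨Th, hThe⟩ := hTh
  have hφcs : HasCompactSupport φ := by
    have := hψ2.comp_isClosedEmbedding (Th.isClosedEmbedding)
    rwa [hThe] at this
  have hφn : ∀ x, ‖φ x‖ ≤ 1 := fun x => hψ3 (T x)
  have hchain : ∀ x, fderiv ℝ φ x = (fderiv ℝ ψ (T x)).comp
      (t • ContinuousLinearMap.id ℝ (EuclideanSpace ℝ (Fin n))) := by
    intro x
    have h1 : HasFDerivAt ψ (fderiv ℝ ψ (T x)) (T x) :=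
      (hψ1.differentiable one_ne_zero (T x)).hasFDerivAt
    have h2 : HasFDerivAt T (t • ContinuousLinearMap.id ℝ (EuclideanSpace ℝ (Fin n))) x :=
      ((hasFDerivAt_id x).const_smul t).add_const c
    exact (h1.comp x h2).fderiv
  have hdiv : ∀ x, divg φ x = t * divg ψ (T x) := by
    intro x
    simp only [divg, hchain x, ContinuousLinearMap.comp_apply,
      ContinuousLinearMap.smul_apply, ContinuousLinearMap.id_apply, _root_.map_smul,
      PiLp.smul_apply, smul_eq_mul, Finset.mul_sum]
  have hdet : (t • ContinuousLinearMap.id ℝ (EuclideanSpace ℝ (Fin n))).det = t ^ n := by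
    simp only [ContinuousLinearMap.det, ContinuousLinearMap.coe_smul,
      ContinuousLinearMap.coe_id, LinearMap.det_smul, finrank_euclideanSpace_fin,
      LinearMap.det_id, mul_one]
  have hfd' : ∀ x ∈ E, HasFDerivWithinAt T
      (t • ContinuousLinearMap.id ℝ (EuclideanSpace ℝ (Fin n))) E x := fun x _ =>
    (((hasFDerivAt_id x).const_smul t).add_const c).hasFDerivWithinAt
  have hinj : Set.InjOn T E := by
    intro a _ b _ hab
    have := add_right_cancel hab
    exact smul_right_injective _ ht.ne' this
  have hCoV := integral_image_eq_integral_abs_det_fderiv_smul volume hE hfd' hinj (divg ψ)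
  have heq : ∫ x in (fun x => t • x + c) '' E, divg ψ x
      = (t ^ n / t) * ∫ x in E, divg φ x := by
    rw [show ((fun x => t • x + c) '' E) = T '' E from rfl, hCoV, ← integral_const_mul]
    apply setIntegral_congr_fun hE
    intro x _
    simp only [hdet, hdiv x, abs_of_pos (pow_pos ht n), smul_eq_mul]
    field_simp
  have : ∫ x in (fun x => t • x + c) '' E, divg ψ x ≤ (t ^ n / t) * ∫ x in E, divg φ x :=
    le_of_eq heq
  calc ENNReal.ofReal (∫ x in (fun x => t • x + c) '' E, divg ψ x)
      = ENNReal.ofReal ((t ^ n / t) * ∫ x in E, divg φ x) := by rw [heq]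
    _ = ENNReal.ofReal (t ^ n / t) * ENNReal.ofReal (∫ x in E, divg φ x) :=
        ENNReal.ofReal_mul (div_nonneg (pow_nonneg ht.le n) ht.le)
    _ ≤ ENNReal.ofReal (t ^ n / t) * perimeter E :=
        mul_le_mul_right (le_perimeter hφcd hφcs hφn) _
lemma coord_le_norm (z : EuclideanSpace ℝ (Fin n)) (i : Fin n) : |z i| ≤ ‖z‖ := by
  rw [EuclideanSpace.norm_eq, ← Real.sqrt_sq_eq_abs]
  apply Real.sqrt_le_sqrt
  have h : z i ^ 2 = ‖z i‖ ^ 2 := by rw [Real.norm_eq_abs, sq_abs]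
  rw [h]
  exact Finset.single_le_sum (f := fun j => ‖z j‖ ^ 2) (fun j _ => by positivity)
    (Finset.mem_univ i)

lemma box_props {m : ℕ} (a b : Fin (m+1) → ℝ) (hle : a ≤ b) :
    MeasurableSet ((EuclideanSpace.equiv (Fin (m+1)) ℝ) ⁻¹' (Icc a b)) ∧
    volume ((EuclideanSpace.equiv (Fin (m+1)) ℝ) ⁻¹' (Icc a b))
      = ∏ i, ENNReal.ofReal (b i - a i) ∧
    perimeter ((EuclideanSpace.equiv (Fin (m+1)) ℝ) ⁻¹' (Icc a b)) < ⊤ := by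
  set L := EuclideanSpace.equiv (Fin (m+1)) ℝ with hLdef
  have hmp : MeasurePreserving (⇑L) volume volume :=
    EuclideanSpace.volume_preserving_symm_measurableEquiv_toLp (Fin (m+1))
  have hemb : MeasurableEmbedding (⇑L) := L.toHomeomorph.measurableEmbedding
  have hmeas : MeasurableSet (⇑L ⁻¹' Icc a b) :=
    (measurableSet_Icc).preimage L.continuous.measurable
  have hvol : volume (⇑L ⁻¹' Icc a b) = ∏ i, ENNReal.ofReal (b i - a i) := by
    rw [hmp.measure_preimage measurableSet_Icc.nullMeasurableSet, Real.volume_Icc_pi]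
  refine ⟨hmeas, hvol, ?_⟩
  set C0 : ℝ :=
    ∑ i : Fin (m+1), 2 * (volume (Icc (a ∘ i.succAbove) (b ∘ i.succAbove))).toReal with hC0
  have hfin : ∀ i : Fin (m+1), volume (Icc (a ∘ i.succAbove) (b ∘ i.succAbove)) < ⊤ := by
    intro i
    rw [Real.volume_Icc_pi]
    exact ENNReal.prod_lt_top (fun j _ => ENNReal.ofReal_lt_top)
  have hperim : perimeter (⇑L ⁻¹' Icc a b) ≤ ENNReal.ofReal C0 := by
    apply perimeter_le
    intro φ hφ1 hφ2 hφ3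
    have hfc : Continuous (fderiv ℝ φ) := hφ1.continuous_fderiv one_ne_zero
    have hdivgc : Continuous (divg φ) := by
      apply continuous_finset_sum
      intro i _
      exact (continuous_apply i).comp ((PiLp.continuous_ofLp ..).comp (hfc.clm_apply continuous_const))
    set ψ : (Fin (m+1) → ℝ) → (Fin (m+1) → ℝ) := fun y => L (φ (L.symm y)) with hψdef
    set ψ' : (Fin (m+1) → ℝ) → (Fin (m+1) → ℝ) →L[ℝ] (Fin (m+1) → ℝ) := fun y =>
      ((L : EuclideanSpace ℝ (Fin (m+1)) →L[ℝ] (Fin (m+1) → ℝ)).comp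
        ((fderiv ℝ φ (L.symm y)).comp
          (L.symm : (Fin (m+1) → ℝ) →L[ℝ] EuclideanSpace ℝ (Fin (m+1))))) with hψ'def
    have hψc : Continuous ψ := L.continuous.comp ((hφ1.continuous).comp L.symm.continuous)
    have hDiv : ∀ y, (∑ i, ψ' y (Pi.single i 1) i) = divg φ (L.symm y) := fun y => rfl
    have Hc : ContinuousOn ψ (Icc a b) := hψc.continuousOn
    have Hd : ∀ x ∈ (Set.pi univ fun i => Ioo (a i) (b i)) \ (∅ : Set (Fin (m+1) → ℝ)),
        HasFDerivAt ψ (ψ' x) x := by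
      intro y _
      have h0 : HasFDerivAt (⇑L.symm)
          (L.symm : (Fin (m+1) → ℝ) →L[ℝ] EuclideanSpace ℝ (Fin (m+1))) y :=
        L.symm.hasFDerivAt
      have h1 : HasFDerivAt φ (fderiv ℝ φ (L.symm y)) (L.symm y) :=
        (hφ1.differentiable one_ne_zero (L.symm y)).hasFDerivAt
      exact L.hasFDerivAt.comp y (h1.comp y h0)
    have Hi : IntegrableOn (fun y => ∑ i, ψ' y (Pi.single i 1) i) (Icc a b) := by
      rw [funext hDiv]
      exact ((hdivgc.comp L.symm.continuous).continuousOn).integrableOn_compact isCompact_Icc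
    have hkey := integral_divergence_of_hasFDerivAt_off_countable a b hle ψ ψ' ∅
      countable_empty Hc Hd Hi
    have htrans : ∫ x in ⇑L ⁻¹' Icc a b, divg φ x
        = ∫ y in Icc a b, ∑ i, ψ' y (Pi.single i 1) i := by
      rw [funext hDiv,
        ← hmp.setIntegral_preimage_emb hemb (fun y => divg φ (L.symm y)) (Icc a b)]
      apply setIntegral_congr_fun hmeas
      intro x _
      simp
    have hbound : ∫ x in ⇑L ⁻¹' Icc a b, divg φ x ≤ C0 := by
      rw [htrans, hkey, hC0]
      apply Finset.sum_le_sum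
      intro i _
      have hmb : ∀ (v : ℝ), |∫ x in Icc (a ∘ i.succAbove) (b ∘ i.succAbove),
          ψ (i.insertNth v x) i| ≤ (volume (Icc (a ∘ i.succAbove) (b ∘ i.succAbove))).toReal := by
        intro v
        have h2 : ∀ x ∈ Icc (a ∘ i.succAbove) (b ∘ i.succAbove),
            ‖ψ (i.insertNth v x) i‖ ≤ 1 := by
          intro x _
          have : ψ (i.insertNth v x) i = (φ (L.symm (i.insertNth v x))) i := rfl
          rw [this, Real.norm_eq_abs]
          exact (coord_le_norm _ i).trans (hφ3 _)
        have h3 := norm_setIntegral_le_of_norm_le_const (hfin i) h2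
        rw [one_mul] at h3
        exact h3
      have h4 := (abs_le.mp (hmb (b i))).2
      have h5 := (abs_le.mp (hmb (a i))).1
      linarith
    exact ENNReal.ofReal_le_ofReal hbound
  exact lt_of_le_of_lt hperim ENNReal.ofReal_lt_top
end NCCaux

open NCCaux
/-- for `Ω` open of finite volume and `1 < α < n/(n-1)`, every measurable
set of positive measure and finite perimeter compactly contained in `Ω` has α-Cheeger
ratio strictly larger than `h_α(Ω)`; hence no α-Cheeger set of `Ω` is compactly
contained in `Ω`. -/
theorem no_compactly_contained_cheegerSet {n : ℕ} (α : ℝ) (h1 : 1 < α)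
    (h2 : α < (n : ℝ) / ((n : ℝ) - 1)) (Ω : Set (EuclideanSpace ℝ (Fin n)))
    (hop : IsOpen Ω) (hΩ : volume Ω < ⊤) :
    (∀ E : Set (EuclideanSpace ℝ (Fin n)), MeasurableSet E → E ⊆ Ω → 0 < volume E →
      perimeter E < ⊤ → IsCompact (closure E) → closure E ⊆ Ω →
      cheegerConst α Ω < cheegerRatio α E) ∧
    ∀ E : Set (EuclideanSpace ℝ (Fin n)), IsCheegerSet α Ω E →
      ¬ (IsCompact (closure E) ∧ closure E ⊆ Ω) := by
  have hα0 : (0:ℝ) < α := lt_trans one_pos h1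
  have hn2 : 2 ≤ n := by
    by_contra h
    push_neg at h
    interval_cases n
    · norm_num at h2; linarith
    · norm_num at h2; linarith
  have hn1R : (0:ℝ) < (n:ℝ) - 1 := by
    have : (2:ℝ) ≤ n := by exact_mod_cast hn2
    linarith
  have hexp : (n:ℝ) - 1 < (n:ℝ) / α := by
    have h3 : α * ((n:ℝ) - 1) < n := by
      have := (lt_div_iff₀ hn1R).mp h2
      linarith
    rw [lt_div_iff₀ hα0]
    linarith
  have main : ∀ E : Set (EuclideanSpace ℝ (Fin n)), MeasurableSet E → E ⊆ Ω → 0 < volume E →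
      perimeter E < ⊤ → IsCompact (closure E) → closure E ⊆ Ω →
      cheegerConst α Ω < cheegerRatio α E := by
    intro E hEm hEΩ hEpos hEfin hK hKΩ
    have hVfin : volume E < ⊤ := lt_of_le_of_lt (measure_mono hEΩ) hΩ
    have hP0 : 0 < perimeter E := perim_pos (by omega) hEm hK hEpos
    set D := volume E ^ (1/α) with hDdef
    have hD0 : D ≠ 0 := (ENNReal.rpow_pos hEpos hVfin.ne).ne'
    have hDt : D ≠ ⊤ := (ENNReal.rpow_lt_top_of_nonneg (by positivity) hVfin.ne).ne
    have hRE0 : cheegerRatio α E ≠ 0 := by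
      rw [cheegerRatio]; exact (ENNReal.div_pos hP0.ne' hDt).ne'
    have hREt : cheegerRatio α E ≠ ⊤ := by
      rw [cheegerRatio]; exact (ENNReal.div_lt_top hEfin.ne hD0).ne
    obtain ⟨r, hr0, hrsub⟩ := hK.exists_thickening_subset_open hop hKΩ
    obtain ⟨R0, hR0⟩ := hK.isBounded.subset_closedBall (0 : EuclideanSpace ℝ (Fin n))
    set R : ℝ := max R0 1 with hRdef
    have hR1 : (1:ℝ) ≤ R := le_max_right _ _
    have hRb : closure E ⊆ closedBall 0 R :=
      hR0.trans (closedBall_subset_closedBall (le_max_left _ _))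
    clear_value R
    have hRpos : (0:ℝ) < R := lt_of_lt_of_le one_pos hR1
    set t : ℝ := 1 + r / (2*R) with htdef
    clear_value t
    have ht1 : 1 < t := by
      rw [htdef]
      have : 0 < r / (2*R) := div_pos hr0 (by linarith)
      linarith
    have ht0 : (0:ℝ) < t := by linarith
    set F := (fun x => t • x + (0 : EuclideanSpace ℝ (Fin n))) '' E with hFdef
    have hFsub : F ⊆ Ω := by
      rintro _ ⟨x, hx, rfl⟩
      apply hrsub
      rw [Metric.mem_thickening_iff]
      refine ⟨x, subset_closure hx, ?_⟩
      have hxR : ‖x‖ ≤ R := by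
        have := hRb (subset_closure hx)
        rwa [mem_closedBall, dist_zero_right] at this
      have hdist : dist (t • x + 0) x = (t - 1) * ‖x‖ := by
        rw [add_zero, dist_eq_norm]
        have : t • x - x = (t - 1) • x := by
          rw [sub_smul, one_smul]
        rw [this, norm_smul, Real.norm_eq_abs, abs_of_pos (by linarith)]
      rw [hdist]
      have h5 : (t - 1) * ‖x‖ ≤ (t - 1) * R :=
        mul_le_mul_of_nonneg_left hxR (by linarith)
      have h6 : (t - 1) * R = r / 2 := by
        rw [htdef]
        field_simp
        ring
      linarith
    have hFmeas : MeasurableSet F := by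
      have himg : F = (fun y => t⁻¹ • y) ⁻¹' E := by
        ext y
        constructor
        · rintro ⟨x, hx, rfl⟩
          show t⁻¹ • (t • x + 0) ∈ E
          rw [add_zero, smul_smul, inv_mul_cancel₀ ht0.ne', one_smul]
          exact hx
        · intro hy
          refine ⟨t⁻¹ • y, hy, ?_⟩
          show t • t⁻¹ • y + 0 = y
          rw [smul_smul, mul_inv_cancel₀ ht0.ne', one_smul, add_zero]
      rw [himg]
      exact hEm.preimage (continuous_const_smul t⁻¹).measurable
    have hFvol : volume F = ENNReal.ofReal (t ^ n) * volume E := vol_scale ht0.le 0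
    have hFpos : 0 < volume F := by
      rw [hFvol]
      exact ENNReal.mul_pos (ENNReal.ofReal_pos.mpr (pow_pos ht0 n)).ne' hEpos.ne'
    have hconst_le : cheegerConst α Ω ≤ cheegerRatio α F := by
      rw [cheegerConst]
      exact iInf_le_of_le F (iInf_le_of_le hFmeas (iInf_le_of_le hFsub
        (iInf_le_of_le hFpos le_rfl)))
    set A := ENNReal.ofReal (t ^ n / t) with hAdef
    set Bq := ENNReal.ofReal (t ^ n) ^ (1/α) with hBdef
    have hBq : Bq = ENNReal.ofReal ((t ^ n) ^ (1/α)) := by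
      rw [hBdef, ← ENNReal.ofReal_rpow_of_pos (pow_pos ht0 n)]
    have hB0 : Bq ≠ 0 := by
      rw [hBq]
      exact (ENNReal.ofReal_pos.mpr (Real.rpow_pos_of_pos (pow_pos ht0 n) _)).ne'
    have hBt : Bq ≠ ⊤ := by rw [hBq]; exact ENNReal.ofReal_ne_top
    have hABlt : A < Bq := by
      rw [hBq, hAdef]
      rw [ENNReal.ofReal_lt_ofReal_iff (Real.rpow_pos_of_pos (pow_pos ht0 n) _)]
      have e1 : t ^ n / t = t ^ ((n:ℝ) - 1) := by
        rw [Real.rpow_sub ht0, Real.rpow_natCast, Real.rpow_one]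
      have e2 : (t ^ n) ^ (1/α) = t ^ ((n:ℝ) * (1/α)) := by
        rw [Real.rpow_mul ht0.le, Real.rpow_natCast]
      rw [e1, e2]
      apply (Real.rpow_lt_rpow_left_iff ht1).mpr
      rw [mul_one_div]
      exact hexp
    have hratio_lt : cheegerRatio α F < cheegerRatio α E := by
      have step1 : cheegerRatio α F ≤ (A * perimeter E) / (Bq * D) := by
        rw [cheegerRatio, hFvol, ENNReal.mul_rpow_of_nonneg _ _ (by positivity : (0:ℝ) ≤ 1/α)]
        exact ENNReal.div_le_div_right (perim_scale_le hEm ht0 0) _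
      have step2 : (A * perimeter E) / (Bq * D) = (A / Bq) * cheegerRatio α E := by
        rw [cheegerRatio, div_eq_mul_inv, div_eq_mul_inv, div_eq_mul_inv,
          ENNReal.mul_inv (Or.inl hB0) (Or.inl hBt)]
        ring
      have step3 : A / Bq < 1 := by
        rw [ENNReal.div_lt_iff (Or.inl hB0) (Or.inl hBt), one_mul]
        exact hABlt
      calc cheegerRatio α F ≤ (A / Bq) * cheegerRatio α E := step1.trans_eq step2
        _ < 1 * cheegerRatio α E := by
            apply ENNReal.mul_lt_mul_left hRE0 hREt
            exact step3
        _ = cheegerRatio α E := one_mul _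
    exact lt_of_le_of_lt hconst_le hratio_lt
  refine ⟨main, ?_⟩
  intro E hE
  rintro ⟨hcomp, hsub⟩
  obtain ⟨hEm, hEΩ, hEpos, hEeq⟩ := hE
  by_cases hfin : perimeter E < ⊤
  · exact absurd hEeq.symm (ne_of_lt (main E hEm hEΩ hEpos hfin hcomp hsub))
  · have hVfin : volume E < ⊤ := lt_of_le_of_lt (measure_mono hEΩ) hΩ
    have hDt : volume E ^ (1/α) ≠ ⊤ :=
      (ENNReal.rpow_lt_top_of_nonneg (by positivity) hVfin.ne).ne
    have hratio_top : cheegerRatio α E = ⊤ := by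
      rw [cheegerRatio]
      exact ENNReal.div_eq_top.mpr (Or.inr ⟨top_le_iff.mp (not_lt.mp hfin), hDt⟩)
    obtain ⟨x₀, hx₀⟩ : Ω.Nonempty := by
      obtain ⟨x, hx⟩ := nonempty_of_measure_ne_zero hEpos.ne'
      exact ⟨x, hEΩ hx⟩
    obtain ⟨δ, hδ0, hball⟩ := Metric.isOpen_iff.mp hop x₀ hx₀
    obtain ⟨m, rfl⟩ : ∃ m, n = m + 1 := ⟨n - 1, by omega⟩
    set s : ℝ := δ / (2 * (m+1)) with hsdef
    have hs0 : 0 < s := by positivity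
    set a : Fin (m+1) → ℝ := fun i => x₀ i - s with hadef
    set b : Fin (m+1) → ℝ := fun i => x₀ i + s with hbdef
    have hle : a ≤ b := by
      intro i
      simp only [hadef, hbdef]
      linarith
    obtain ⟨hBm, hBvol, hBperim⟩ := box_props a b hle
    set B := ⇑(EuclideanSpace.equiv (Fin (m+1)) ℝ) ⁻¹' (Icc a b) with hBsetdef
    have hBsub : B ⊆ Ω := by
      intro x hx
      apply hball
      rw [mem_ball]
      obtain ⟨hx1, hx2⟩ := hx
      have hxi : ∀ i, |x i - x₀ i| ≤ s := by
        intro i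
        have ha' : x₀ i - s ≤ x i := hx1 i
        have hb' : x i ≤ x₀ i + s := hx2 i
        rw [abs_le]
        constructor <;> [linarith; linarith]
      have hsum : ∑ i, dist (x i) (x₀ i) ^ 2 ≤ (((m:ℝ)+1) * s)^2 := by
        have hterm : ∀ i ∈ Finset.univ, dist (x i) (x₀ i) ^ 2 ≤ s ^ 2 := by
          intro i _
          rw [Real.dist_eq]
          exact pow_le_pow_left₀ (abs_nonneg _) (hxi i) 2
        calc ∑ i, dist (x i) (x₀ i) ^ 2 ≤ ∑ _i : Fin (m+1), s ^ 2 :=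
              Finset.sum_le_sum hterm
          _ = ((m:ℝ)+1) * s ^ 2 := by
              rw [Finset.sum_const, Finset.card_univ, Fintype.card_fin, nsmul_eq_mul]
              push_cast
              ring
          _ ≤ (((m:ℝ)+1) * s)^2 := by nlinarith [hs0.le, sq_nonneg s]
      have hdle : dist x x₀ ≤ ((m:ℝ)+1) * s := by
        rw [EuclideanSpace.dist_eq]
        calc Real.sqrt (∑ i, dist (x i) (x₀ i) ^ 2)
            ≤ Real.sqrt ((((m:ℝ)+1) * s)^2) := Real.sqrt_le_sqrt hsum
          _ = ((m:ℝ)+1) * s := Real.sqrt_sq (by positivity)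
      have heq : ((m:ℝ)+1) * s = δ / 2 := by
        rw [hsdef]
        field_simp
      linarith
    have hBpos : 0 < volume B := by
      rw [hBvol]
      rw [CanonicallyOrderedAdd.prod_pos]
      intro i _
      apply ENNReal.ofReal_pos.mpr
      simp only [hadef, hbdef]
      linarith
    have hBVfin : volume B < ⊤ := lt_of_le_of_lt (measure_mono hBsub) hΩ
    have hBD0 : volume B ^ (1/α) ≠ 0 := (ENNReal.rpow_pos hBpos hBVfin.ne).ne'
    have hconst_le : cheegerConst α Ω ≤ cheegerRatio α B := by
      rw [cheegerConst]
      exact iInf_le_of_le B (iInf_le_of_le hBm (iInf_le_of_le hBsub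
        (iInf_le_of_le hBpos le_rfl)))
    have hlt : cheegerConst α Ω < ⊤ := by
      apply lt_of_le_of_lt hconst_le
      rw [cheegerRatio]
      exact ENNReal.div_lt_top hBperim.ne hBD0
    rw [← hEeq, hratio_top] at hlt
    exact lt_irrefl _ hlt
end

section
/- Optimal rounding radius: let α ∈ (1, 2) and 2 ≤ L < M(α) + 2, where M(α) = (π/2)·(2−α)/(α−1). Then the function f(t) = (2L + 4 − (8 − 2π)t) / (2L − (4 − π)t²)^{1/α}, which gives the α-Cheeger ratio of the rectangle R_L with corners rounded at radius t, attains over t ∈ (0, 1] its unique minimum at t = r = ( L + 2 − √( (L+2)² − 2(4−π)(2−α)Lα ) ) / ( (4−π)(2−α) ), the smaller root of the quadratic (4−π)(2−α)t² − (2L+4)t + 2Lα = 0, and this r lies in (0, 1). -/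
open MeasureTheory ENNReal Metric Set

/-- The open rectangle `R_L = (-L/2, L/2) × (-1, 1)` in the Euclidean plane. -/
def Rect (L : ℝ) : Set (EuclideanSpace ℝ (Fin 2)) :=
  {p | p 0 ∈ Set.Ioo (-(L / 2)) (L / 2) ∧ p 1 ∈ Set.Ioo (-1 : ℝ) 1}

/-- The length `M(α) = (π/2)·(2-α)/(α-1)`. -/
noncomputable def Mlen (α : ℝ) : ℝ := Real.pi / 2 * ((2 - α) / (α - 1))

/-- The (open) stadium of length `M` centered at `(c, 0)`: the set of points at distance
less than `1` from the horizontal segment `[c - M/2, c + M/2] × {0}`; its horizontal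
translates are obtained by varying `c`. -/
noncomputable def Stadium (M c : ℝ) : Set (EuclideanSpace ℝ (Fin 2)) :=
  {p | Metric.infDist p
    {q : EuclideanSpace ℝ (Fin 2) | q 0 ∈ Set.Icc (c - M / 2) (c + M / 2) ∧ q 1 = 0} < 1}

/-- The rectangle `R_L` with the four corners cut away by quarter-circles of radius `t`:
the set of points at distance less than `t` from the closed inner rectangle
`[-L/2 + t, L/2 - t] × [-1 + t, 1 - t]`. -/
noncomputable def RoundedRect (L t : ℝ) : Set (EuclideanSpace ℝ (Fin 2)) :=
  {p | Metric.infDist p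
    {q : EuclideanSpace ℝ (Fin 2) | q 0 ∈ Set.Icc (-(L / 2) + t) (L / 2 - t) ∧
      q 1 ∈ Set.Icc (-1 + t) (1 - t)} < t}

/-- The optimal rounding radius for the rectangle `R_L`:
`r = (L + 2 - √((L+2)² - 2(4-π)(2-α)Lα)) / ((4-π)(2-α))`. -/
noncomputable def rRad (α L : ℝ) : ℝ :=
  (L + 2 - Real.sqrt ((L + 2) ^ 2 - 2 * (4 - Real.pi) * (2 - α) * L * α)) /
    ((4 - Real.pi) * (2 - α))

set_option maxHeartbeats 1000000 in
private theorem roundedRect_ratio_unique_min_aux (α L : ℝ) (h1 : 1 < α) (h2 : α < 2)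
    (hL1 : 2 ≤ L) (hL2 : L < Mlen α + 2) :
    0 < rRad α L ∧ rRad α L < 1 ∧
    (4 - Real.pi) * (2 - α) * rRad α L ^ 2 - (2 * L + 4) * rRad α L + 2 * L * α = 0 ∧
    (∀ t ∈ Set.Ioc (0 : ℝ) 1,
      (2 * L + 4 - (8 - 2 * Real.pi) * rRad α L) /
          (2 * L - (4 - Real.pi) * rRad α L ^ 2) ^ (1 / α) ≤
        (2 * L + 4 - (8 - 2 * Real.pi) * t) / (2 * L - (4 - Real.pi) * t ^ 2) ^ (1 / α)) ∧
    ∀ t ∈ Set.Ioc (0 : ℝ) 1,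
      (2 * L + 4 - (8 - 2 * Real.pi) * t) / (2 * L - (4 - Real.pi) * t ^ 2) ^ (1 / α) =
        (2 * L + 4 - (8 - 2 * Real.pi) * rRad α L) /
          (2 * L - (4 - Real.pi) * rRad α L ^ 2) ^ (1 / α) →
      t = rRad α L := by
  have hπ4 : Real.pi < 3.15 := Real.pi_lt_d2
  have hπ3 : 3 < Real.pi := Real.pi_gt_three
  have hα0 : (0:ℝ) < α := by linarith
  have hα1 : (0:ℝ) < α - 1 := by linarith
  set c : ℝ := (4 - Real.pi) * (2 - α) with hc_def
  have hc0 : 0 < c := mul_pos (by linarith) (by linarith)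
  have hc1 : c < 1 := by nlinarith
  have hkey : c - (2*L+4) + 2*L*α < 0 := by
    have h2' : (L - 2) * (α - 1) < Real.pi / 2 * (2 - α) := by
      have h := hL2
      rw [Mlen] at h
      rw [show Real.pi / 2 * ((2 - α) / (α - 1)) = (Real.pi / 2 * (2 - α)) / (α - 1) by ring] at h
      calc (L-2)*(α-1) < ((Real.pi/2*(2-α))/(α-1)) * (α-1) := by
            apply mul_lt_mul_of_pos_right _ hα1; linarith
        _ = Real.pi/2*(2-α) := by field_simp
    nlinarith
  set s : ℝ := (L+2)^2 - 2*(4-Real.pi)*(2-α)*L*α with hs_def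
  have hsc : s = (L+2)^2 - 2*c*L*α := by rw [hs_def, hc_def]; ring
  have hs1 : (L+2-c)^2 < s := by
    have h' : (0:ℝ) < 2*L+4-2*L*α - c := by linarith
    nlinarith [mul_pos hc0 h']
  have hs0 : (0:ℝ) ≤ s := le_trans (sq_nonneg _) hs1.le
  have hw2 : Real.sqrt s ^ 2 = s := Real.sq_sqrt hs0
  set w : ℝ := Real.sqrt s with hw_def
  have hw0 : 0 ≤ w := Real.sqrt_nonneg _
  have hLα : (0:ℝ) < 2*c*L*α := by positivity
  have hwlt : w < L + 2 := by nlinarith [hw2, hsc]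
  have hwgt : L + 2 - c < w := by nlinarith [hw2, hs1, hw0, sq_nonneg (w - (L+2-c))]
  have hrq : rRad α L = (L + 2 - w) / c := by rw [rRad]
  set r : ℝ := rRad α L with hr_def
  have hr0 : 0 < r := by rw [hrq]; exact div_pos (by linarith) hc0
  have hr1 : r < 1 := by rw [hrq, div_lt_one hc0]; linarith
  have hroot : c * r^2 - (2*L+4)*r + 2*L*α = 0 := by
    rw [hrq]; field_simp
    linear_combination hw2 + hsc
  have hfac : ∀ t : ℝ, c*t^2 - (2*L+4)*t + 2*L*α = (t - r)*(c*(t+r) - (2*L+4)) := by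
    intro t; linear_combination hroot
  have hDpos : ∀ t : ℝ, t ∈ Set.Icc (0:ℝ) 1 → 0 < 2*L - (4 - Real.pi)*t^2 := by
    intro t ht
    nlinarith [ht.1, ht.2, mul_nonneg (sub_nonneg.2 ht.2) (by linarith [ht.1] : (0:ℝ) ≤ 1 + t)]
  set f : ℝ → ℝ := fun t => (2 * L + 4 - (8 - 2 * Real.pi) * t) / (2 * L - (4 - Real.pi) * t ^ 2) ^ (1 / α) with hf_def
  have hDeriv : ∀ t ∈ Set.Icc (0:ℝ) 1, HasDerivAt f
      ((2*L - (4-Real.pi)*t^2) ^ ((1:ℝ)/α - 1) * ((2*(4-Real.pi)/α) * ((t - r)*((2*L+4) - c*(t+r)))) /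
        (((2*L - (4-Real.pi)*t^2) ^ ((1:ℝ)/α - 1) * (2*L - (4-Real.pi)*t^2)))^2) t := by
    intro t ht
    have hDt := hDpos t ht
    have hN : HasDerivAt (fun t : ℝ => 2*L + 4 - (8 - 2*Real.pi)*t) (-(8 - 2*Real.pi)) t := by
      simpa using ((hasDerivAt_id t).const_mul (8 - 2*Real.pi)).const_sub (2*L+4)
    have hDd : HasDerivAt (fun t : ℝ => 2*L - (4 - Real.pi)*t^2) (-((4 - Real.pi)*(2*t))) t := by
      have h0 := ((hasDerivAt_pow 2 t).const_mul (4 - Real.pi)).const_sub (2*L)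
      norm_num at h0
      convert h0 using 1
    have hDp := hDd.rpow_const (p := 1/α) (Or.inl (ne_of_gt hDt))
    have hne : (2*L - (4 - Real.pi)*t^2) ^ ((1:ℝ)/α) ≠ 0 := ne_of_gt (Real.rpow_pos_of_pos hDt _)
    have hdiv := hN.div hDp hne
    have hrel : (2*L - (4 - Real.pi)*t^2) ^ ((1:ℝ)/α) = (2*L - (4 - Real.pi)*t^2) ^ ((1:ℝ)/α - 1) * (2*L - (4 - Real.pi)*t^2) := by
      rw [Real.rpow_sub_one (ne_of_gt hDt)]
      field_simp
    rw [hrel] at hdiv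
    refine hdiv.congr_deriv (Eq.symm ?_)
    have hq := hfac t
    have hαne : α ≠ 0 := ne_of_gt hα0
    set P1 : ℝ := (2*L - (4 - Real.pi)*t^2) ^ ((1:ℝ)/α - 1) with hP1_def
    have hP1ne : P1 ≠ 0 := by rw [hP1_def]; exact ne_of_gt (Real.rpow_pos_of_pos hDt _)
    field_simp
    linear_combination (2*(4-Real.pi)) * hq - (2*(4-Real.pi)*t^2) * hc_def
  have hsub1 : Set.Icc (0:ℝ) r ⊆ Set.Icc (0:ℝ) 1 := Set.Icc_subset_Icc le_rfl hr1.le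
  have hsub2 : Set.Icc r (1:ℝ) ⊆ Set.Icc (0:ℝ) 1 := Set.Icc_subset_Icc hr0.le le_rfl
  have hcont : ContinuousOn f (Set.Icc (0:ℝ) 1) := fun t ht =>
    (hDeriv t ht).continuousAt.continuousWithinAt
  have hanti : StrictAntiOn f (Set.Icc (0:ℝ) r) := by
    apply strictAntiOn_of_deriv_neg (convex_Icc _ _) (hcont.mono hsub1)
    intro x hx
    rw [interior_Icc] at hx
    have hx1 : x ∈ Set.Icc (0:ℝ) 1 := ⟨hx.1.le, by linarith [hx.2]⟩
    rw [(hDeriv x hx1).deriv]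
    have hDx := hDpos x hx1
    have hP1 : (0:ℝ) < (2*L - (4-Real.pi)*x^2) ^ ((1:ℝ)/α - 1) := Real.rpow_pos_of_pos hDx _
    have hfactor : (0:ℝ) < 2*L+4 - c*(x+r) := by
      nlinarith [mul_pos hc0 (show (0:ℝ) < 2 - (x + r) by linarith [hx.2])]
    have hK : (0:ℝ) < 2*(4-Real.pi)/α := by apply div_pos <;> linarith
    exact div_neg_of_neg_of_pos
      (mul_neg_of_pos_of_neg hP1 (mul_neg_of_pos_of_neg hK
        (mul_neg_of_neg_of_pos (by linarith [hx.2]) hfactor)))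
      (pow_pos (mul_pos hP1 hDx) 2)
  have hmono : StrictMonoOn f (Set.Icc r (1:ℝ)) := by
    apply strictMonoOn_of_deriv_pos (convex_Icc _ _) (hcont.mono hsub2)
    intro x hx
    rw [interior_Icc] at hx
    have hx1 : x ∈ Set.Icc (0:ℝ) 1 := ⟨by linarith [hx.1, hr0], hx.2.le⟩
    rw [(hDeriv x hx1).deriv]
    have hDx := hDpos x hx1
    have hP1 : (0:ℝ) < (2*L - (4-Real.pi)*x^2) ^ ((1:ℝ)/α - 1) := Real.rpow_pos_of_pos hDx _
    have hfactor : (0:ℝ) < 2*L+4 - c*(x+r) := by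
      nlinarith [mul_pos hc0 (show (0:ℝ) < 2 - (x + r) by linarith [hx.2])]
    have hK : (0:ℝ) < 2*(4-Real.pi)/α := by apply div_pos <;> linarith
    exact div_pos
      (mul_pos hP1 (mul_pos hK (mul_pos (by linarith [hx.1]) hfactor)))
      (pow_pos (mul_pos hP1 hDx) 2)
  have hrmem : r ∈ Set.Icc (0:ℝ) r := ⟨hr0.le, le_rfl⟩
  have hrmem' : r ∈ Set.Icc r (1:ℝ) := ⟨le_rfl, hr1.le⟩
  have hmin : ∀ t ∈ Set.Ioc (0:ℝ) 1, f r ≤ f t := by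
    intro t ht
    rcases lt_trichotomy t r with h | h | h
    · exact (hanti ⟨ht.1.le, h.le⟩ hrmem h).le
    · rw [h]
    · exact (hmono hrmem' ⟨h.le, ht.2⟩ h).le
  have huniq : ∀ t ∈ Set.Ioc (0:ℝ) 1, f t = f r → t = r := by
    intro t ht heq
    rcases lt_trichotomy t r with h | h | h
    · exact absurd heq (ne_of_gt (hanti ⟨ht.1.le, h.le⟩ hrmem h))
    · exact h
    · exact absurd heq (ne_of_gt (hmono hrmem' ⟨h.le, ht.2⟩ h))
  refine ⟨hr0, hr1, ?_, ?_, ?_⟩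
  · exact hroot
  · exact hmin
  · exact huniq

/-- optimal rounding radius: for `α ∈ (1,2)` and `2 ≤ L < M(α) + 2`,
the function `f(t) = (2L + 4 - (8-2π)t) / (2L - (4-π)t²)^(1/α)` (the α-Cheeger ratio
of `R_L` with corners rounded at radius `t`) attains over `(0,1]` its unique minimum
at `t = r`, the smaller root of `(4-π)(2-α)t² - (2L+4)t + 2Lα = 0`, and `r ∈ (0,1)`. -/
theorem roundedRect_ratio_unique_min (α L : ℝ) (h1 : 1 < α) (h2 : α < 2)
    (hL1 : 2 ≤ L) (hL2 : L < Mlen α + 2) :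
    0 < rRad α L ∧ rRad α L < 1 ∧
    (4 - Real.pi) * (2 - α) * rRad α L ^ 2 - (2 * L + 4) * rRad α L + 2 * L * α = 0 ∧
    (∀ t ∈ Set.Ioc (0 : ℝ) 1,
      (2 * L + 4 - (8 - 2 * Real.pi) * rRad α L) /
          (2 * L - (4 - Real.pi) * rRad α L ^ 2) ^ (1 / α) ≤
        (2 * L + 4 - (8 - 2 * Real.pi) * t) / (2 * L - (4 - Real.pi) * t ^ 2) ^ (1 / α)) ∧
    ∀ t ∈ Set.Ioc (0 : ℝ) 1,
      (2 * L + 4 - (8 - 2 * Real.pi) * t) / (2 * L - (4 - Real.pi) * t ^ 2) ^ (1 / α) =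
        (2 * L + 4 - (8 - 2 * Real.pi) * rRad α L) /
          (2 * L - (4 - Real.pi) * rRad α L ^ 2) ^ (1 / α) →
      t = rRad α L :=
  roundedRect_ratio_unique_min_aux α L h1 h2 hL1 hL2
end
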